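/- arXiv:2002.07567 — 2 statements merged into one kernel-verified Lean document; each statement's English description precedes it below -/
import Mathlib

section
/- Fix a₀ > 0 and λ ≥ 0, and let σ ∈ ℂ with Re(σ) = a ≥ a₀. Define θ = (e^σ + e^{-σ})/(e^σ − e^{-σ}) and ρ₀ = e^{-2a₀}. Then (1−ρ₀)/(1+ρ₀) ≤ |θ| ≤ (1+ρ₀)/(1−ρ₀) and |θ + 1| ≥ 2/(1 + ρ₀). -/
open Complex

/-- For `σ` with `Re σ ≥ a₀ > 0`, with `θ = (e^σ + e^{-σ})/(e^σ − e^{-σ})` and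
`ρ₀ = e^{-2a₀}`, one has `(1−ρ₀)/(1+ρ₀) ≤ |θ| ≤ (1+ρ₀)/(1−ρ₀)` and
`|θ + 1| ≥ 2/(1 + ρ₀)`. -/
theorem theta_bounds (a₀ : ℝ) (ha₀ : 0 < a₀) (σ : ℂ) (hσ : a₀ ≤ σ.re) :
    let θ : ℂ := (Complex.exp σ + Complex.exp (-σ)) / (Complex.exp σ - Complex.exp (-σ))
    let ρ₀ : ℝ := Real.exp (-2 * a₀)
    (1 - ρ₀) / (1 + ρ₀) ≤ ‖θ‖ ∧
    ‖θ‖ ≤ (1 + ρ₀) / (1 - ρ₀) ∧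
    2 / (1 + ρ₀) ≤ ‖θ + 1‖ := by
  intro θ ρ₀
  set w : ℂ := Complex.exp (-2 * σ) with hw
  have hρ₀pos : 0 < ρ₀ := Real.exp_pos _
  have hρ₀lt : ρ₀ < 1 := by
    have : -2 * a₀ < 0 := by linarith
    simpa [ρ₀] using Real.exp_lt_one_iff.mpr this
  have hwabs : ‖w‖ ≤ ρ₀ := by
    rw [hw, Complex.norm_exp]
    apply Real.exp_le_exp.mpr
    have : (-2 * σ).re = -2 * σ.re := by simp
    rw [this]
    linarith
  have hwlt : ‖w‖ < 1 := lt_of_le_of_lt hwabs hρ₀lt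
  have hexpne : Complex.exp σ ≠ 0 := Complex.exp_ne_zero σ
  have hfac : Complex.exp (-σ) = Complex.exp σ * w := by
    rw [hw, ← Complex.exp_add]; ring_nf
  have h1w_ne : (1 : ℂ) - w ≠ 0 := by
    intro h
    have : w = 1 := by linear_combination -h
    rw [this] at hwlt; simp at hwlt
  have hθ : θ = (1 + w) / (1 - w) := by
    simp only [θ, hfac]
    rw [show Complex.exp σ + Complex.exp σ * w = Complex.exp σ * (1 + w) by ring,
        show Complex.exp σ - Complex.exp σ * w = Complex.exp σ * (1 - w) by ring,
        mul_div_mul_left _ _ hexpne]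
  -- bounds on |1±w|
  have hub1 : ‖1 + w‖ ≤ 1 + ρ₀ := by
    calc ‖1 + w‖ ≤ ‖(1:ℂ)‖ + ‖w‖ := norm_add_le _ _
    _ ≤ 1 + ρ₀ := by simp [hwabs]
  have hub2 : ‖1 - w‖ ≤ 1 + ρ₀ := by
    calc ‖1 - w‖ ≤ ‖(1:ℂ)‖ + ‖w‖ := by
          simpa [sub_eq_add_neg] using norm_add_le (1:ℂ) (-w)
    _ ≤ 1 + ρ₀ := by simp [hwabs]
  have hlb1 : 1 - ρ₀ ≤ ‖1 + w‖ := by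
    have h := norm_add_le (1 + w) (-w)
    simp only [add_neg_cancel_right, norm_one, norm_neg] at h
    linarith [hwabs]
  have hlb2 : 1 - ρ₀ ≤ ‖1 - w‖ := by
    have h := norm_add_le (1 - w) w
    simp only [sub_add_cancel, norm_one] at h
    linarith [hwabs]
  have h1wpos : 0 < ‖1 - w‖ := by
    simpa using (norm_pos_iff.mpr h1w_ne)
  have hρ1 : (0:ℝ) < 1 - ρ₀ := by linarith
  refine ⟨?_, ?_, ?_⟩
  · rw [hθ, norm_div]
    exact div_le_div₀ (by positivity) hlb1 (by linarith) hub2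
  · rw [hθ, norm_div]
    exact div_le_div₀ (by positivity) hub1 hρ1 hlb2
  · have hθ1 : θ + 1 = 2 / (1 - w) := by
      rw [hθ, div_add' _ _ _ h1w_ne]; ring_nf
    rw [hθ1, norm_div]
    simp only [Complex.norm_ofNat]
    exact div_le_div₀ (by norm_num) (by norm_num) (by linarith) hub2
end

section
/- Let G₁(s) = 1/d(s) with d(s) = (s+2λ+αs²−qs)·sinh(σ)/σ + (αs−q+1)·cosh(σ), σ² = s²+2λs. If 2λ = q−1 and α ≠ (q−1) + (1/3)(q−1)², then lim_{s→0} s·G₁(s) = 1/(α − (q−1) − (1/3)(q−1)²), i.e. G₁ has a simple pole at the origin with that residue. -/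
open Complex Filter

noncomputable def sinhcSq (z : ℂ) : ℂ := ∑' n : ℕ, z ^ n / ((2 * n + 1).factorial : ℂ)

noncomputable def coshSq (z : ℂ) : ℂ := ∑' n : ℕ, z ^ n / ((2 * n).factorial : ℂ)

/-- The denominator `d(s)` of the transfer function, with `σ² = s² + 2λs`. -/
noncomputable def dfun (q α lam : ℝ) (s : ℂ) : ℂ :=
  (s + 2 * lam + α * s ^ 2 - q * s) * sinhcSq (s ^ 2 + 2 * lam * s) +
    (α * s - q + 1) * coshSq (s ^ 2 + 2 * lam * s)

open FormalMultilinearSeries in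
lemma hasDerivAt_factorialSeries (a : ℕ → ℕ)
    (ha : ∀ n : ℕ, (n + 1) * (a n).factorial ≤ (a (n + 1)).factorial) :
    HasDerivAt (fun z : ℂ => ∑' n : ℕ, z ^ n / ((a n).factorial : ℂ))
      (((a 1).factorial : ℂ))⁻¹ 0 := by
  set c : ℕ → ℂ := fun n => (((a n).factorial : ℂ))⁻¹ with hc
  have hcne : ∀ n, c n ≠ 0 := fun n =>
    inv_ne_zero (Nat.cast_ne_zero.mpr (a n).factorial_ne_zero)
  have hratio : Tendsto (fun n => ‖c (n + 1)‖ / ‖c n‖) atTop (nhds 0) := by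
    apply squeeze_zero (g := fun n : ℕ => 1 / ((n : ℝ) + 1))
      (fun n => div_nonneg (norm_nonneg _) (norm_nonneg _))
    · intro n
      have h1 : ‖c (n + 1)‖ = (((a (n + 1)).factorial : ℝ))⁻¹ := by simp [hc]
      have h2 : ‖c n‖ = (((a n).factorial : ℝ))⁻¹ := by simp [hc]
      rw [h1, h2, inv_div_inv]
      rw [div_le_div_iff₀ (by positivity) (by positivity)]
      have := ha n
      have : ((n + 1) * (a n).factorial : ℝ) ≤ ((a (n + 1)).factorial : ℝ) := by
        exact_mod_cast this
      push_cast at this ⊢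
      nlinarith [this]
    · exact tendsto_one_div_add_atTop_nhds_zero_nat
  have hrad : (ofScalars ℂ c).radius = ⊤ :=
    ofScalars_radius_eq_top_of_tendsto ℂ c (Eventually.of_forall hcne) hratio
  have hpos : 0 < (ofScalars ℂ c).radius := hrad ▸ ENNReal.zero_lt_top
  have hder := ((ofScalars ℂ c).hasFPowerSeriesOnBall hpos).hasFPowerSeriesAt.hasDerivAt
  have hfun : (fun z : ℂ => ∑' n : ℕ, z ^ n / ((a n).factorial : ℂ)) =
      (ofScalars ℂ c).sum := by
    funext z
    rw [show (ofScalars ℂ c).sum z = ofScalarsSum c z from rfl, ofScalars_sum_eq]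
    exact tsum_congr fun n => by rw [smul_eq_mul, div_eq_mul_inv, mul_comm]
  rw [hfun]
  convert hder using 1
  · rfl
  · rfl
  rw [ofScalars_apply_eq]
  simp [hc]

lemma sinhcSq_zero : sinhcSq 0 = 1 := by
  rw [sinhcSq, tsum_eq_single 0 (fun n hn => by simp [zero_pow hn])]
  simp

lemma coshSq_zero : coshSq 0 = 1 := by
  rw [coshSq, tsum_eq_single 0 (fun n hn => by simp [zero_pow hn])]
  simp

lemma hasDerivAt_sinhcSq : HasDerivAt sinhcSq (6 : ℂ)⁻¹ 0 := by
  have := hasDerivAt_factorialSeries (fun n => 2 * n + 1) (fun n => by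
    show (n + 1) * (2 * n + 1).factorial ≤ (2 * (n + 1) + 1).factorial
    have h : (2 * (n + 1) + 1).factorial = (2 * n + 3) * (2 * n + 2).factorial := by
      rw [show 2 * (n + 1) + 1 = (2 * n + 2) + 1 by ring, Nat.factorial_succ]
    rw [h]
    exact Nat.mul_le_mul (by omega) (Nat.factorial_le (by omega)))
  unfold sinhcSq
  simpa [show Nat.factorial 3 = 6 from rfl] using this

lemma hasDerivAt_coshSq : HasDerivAt coshSq (2 : ℂ)⁻¹ 0 := by
  have := hasDerivAt_factorialSeries (fun n => 2 * n) (fun n => by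
    show (n + 1) * (2 * n).factorial ≤ (2 * (n + 1)).factorial
    have h : (2 * (n + 1)).factorial = (2 * n + 2) * (2 * n + 1).factorial := by
      rw [show 2 * (n + 1) = (2 * n + 1) + 1 by ring, Nat.factorial_succ]
    rw [h]
    exact Nat.mul_le_mul (by omega) (Nat.factorial_le (by omega)))
  unfold coshSq
  simpa using this

/-- If `2λ = q − 1` and `α ≠ (q−1) + (1/3)(q−1)²`, then
`s·G₁(s) = s/d(s) → 1/(α − (q−1) − (1/3)(q−1)²)` as `s → 0`:
`G₁` has a simple pole at the origin with the stated residue. -/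
theorem simple_pole_at_origin (q α lam : ℝ) (hq : 1 < q) (hα : 0 ≤ α)
    (hlam : 2 * lam = q - 1) (hexc : α ≠ (q - 1) + 1 / 3 * (q - 1) ^ 2) :
    Tendsto (fun s : ℂ => s * (1 / dfun q α lam s)) (nhdsWithin 0 {0}ᶜ)
      (nhds (((α - (q - 1) - 1 / 3 * (q - 1) ^ 2 : ℝ) : ℂ)⁻¹)) := by
  have hlamC : (lam : ℂ) = ((q : ℂ) - 1) / 2 := by
    have : lam = (q - 1) / 2 := by linarith
    rw [this]; push_cast; ring
  -- derivative of z(s) = s² + 2λs at 0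
  have hz : HasDerivAt (fun s : ℂ => s ^ 2 + 2 * (lam : ℂ) * s) (2 * (lam : ℂ)) 0 := by
    have := (hasDerivAt_pow 2 (0 : ℂ)).add ((hasDerivAt_id (0 : ℂ)).const_mul (2 * (lam : ℂ)))
    simp at this
    exact this
  have hz0 : (0 : ℂ) ^ 2 + 2 * (lam : ℂ) * 0 = 0 := by ring
  have hS' : HasDerivAt sinhcSq (6 : ℂ)⁻¹ ((0 : ℂ) ^ 2 + 2 * (lam : ℂ) * 0) := by
    rw [hz0]; exact hasDerivAt_sinhcSq
  have hC' : HasDerivAt coshSq (2 : ℂ)⁻¹ ((0 : ℂ) ^ 2 + 2 * (lam : ℂ) * 0) := by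
    rw [hz0]; exact hasDerivAt_coshSq
  have hS : HasDerivAt (fun s : ℂ => sinhcSq (s ^ 2 + 2 * (lam : ℂ) * s))
      ((6 : ℂ)⁻¹ * (2 * (lam : ℂ))) 0 :=
    by have := HasDerivAt.comp (𝕜 := ℂ) (𝕜' := ℂ) 0 hS' hz; exact this
  have hC : HasDerivAt (fun s : ℂ => coshSq (s ^ 2 + 2 * (lam : ℂ) * s))
      ((2 : ℂ)⁻¹ * (2 * (lam : ℂ))) 0 :=
    by have := HasDerivAt.comp (𝕜 := ℂ) (𝕜' := ℂ) 0 hC' hz; exact this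
  have hA : HasDerivAt (fun s : ℂ => s + 2 * (lam : ℂ) + (α : ℂ) * s ^ 2 - (q : ℂ) * s)
      ((1 : ℂ) - (q : ℂ)) 0 := by
    have := (((hasDerivAt_id (0 : ℂ)).add_const (2 * (lam : ℂ))).add
      ((hasDerivAt_pow 2 (0 : ℂ)).const_mul (α : ℂ))).sub
      ((hasDerivAt_id (0 : ℂ)).const_mul (q : ℂ))
    simp at this
    exact this
  have hB : HasDerivAt (fun s : ℂ => (α : ℂ) * s - (q : ℂ) + 1) (α : ℂ) 0 := by
    simpa using (((hasDerivAt_id (0 : ℂ)).const_mul (α : ℂ)).sub_const (q : ℂ)).add_const 1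
  set C : ℂ := ((α - (q - 1) - 1 / 3 * (q - 1) ^ 2 : ℝ) : ℂ) with hCdef
  have hd : HasDerivAt (dfun q α lam) C 0 := by
    have := (hA.mul hS).add (hB.mul hC)
    convert this using 1
    · rfl
    · rfl
    · rfl
    rw [hz0, sinhcSq_zero, coshSq_zero, hCdef, hlamC]
    push_cast
    ring
  have hCne : C ≠ 0 := by
    rw [hCdef]
    rw [Complex.ofReal_ne_zero]
    intro h
    apply hexc
    linarith [h]
  have hslope := hasDerivAt_iff_tendsto_slope.mp hd
  have h0 : dfun q α lam 0 = 0 := by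
    simp only [dfun]
    rw [show (0 : ℂ) ^ 2 + 2 * (lam : ℂ) * 0 = 0 by ring, sinhcSq_zero, coshSq_zero, hlamC]
    ring
  have hinv := hslope.inv₀ hCne
  refine hinv.congr' ?_
  filter_upwards [self_mem_nhdsWithin] with s hs
  have hs' : s ≠ 0 := hs
  rw [slope_def_field, h0, sub_zero, sub_zero, inv_div, div_eq_mul_inv, one_div]
end
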